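/- Let p_l, p_r, p_s ∈ (0,1]. Let N = (I − Q_shs)⁻¹, t = N·𝟏, and v = (2N − I)·t − t ⊙ t, where ⊙ denotes entrywise (Hadamard) product. Then v₀₀ = ((p_l p_r + p_l² + p_r² − p_l² p_r²)/(p_l p_r p_s (p_l + p_r − p_l p_r)))² − (p_l² p_r (1−p_r)(2−p_r) + p_l³ (1−p_r)²(3+p_r) + 3p_r³ + p_l p_r (4 + 2p_r − 5p_r²))/(p_l p_r p_s (p_l + p_r − p_l p_r)²). (v₀₀ is the variance of the latency, in units of τ², of two-link entanglement distribution with single-heralded entanglement generation started from the empty state 00; e.g. for p_l = p_r = 1 it equals 4(1−p_s)/p_s², and for p_r = p_s = 1 it equals (1−p_l)/p_l².) -/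

import Mathlib

set_option maxHeartbeats 1600000


open Matrix

/-- Latency variance of two-link entanglement distribution with single-heralded
entanglement generation via the fundamental matrix: for `p_l, p_r, p_s ∈ (0,1]`,
with `N = (I − Q_shs)⁻¹`, `t = N·𝟏`, and `v = (2N − I)·t − t ⊙ t` (Hadamard
product), one has
`v₀₀ = ((p_l p_r + p_l² + p_r² − p_l² p_r²)/(p_l p_r p_s(p_l + p_r − p_l p_r)))²
  − (p_l² p_r(1−p_r)(2−p_r) + p_l³(1−p_r)²(3+p_r) + 3p_r³ + p_l p_r(4+2p_r−5p_r²))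
      /(p_l p_r p_s (p_l + p_r − p_l p_r)²)`. States are ordered `(00,01,10,11)`. -/
theorem two_link_single_heralded_latency_variance (pl pr ps : ℝ)
    (hl : 0 < pl) (hl' : pl ≤ 1) (hr : 0 < pr) (hr' : pr ≤ 1)
    (hs : 0 < ps) (hs' : ps ≤ 1) :
    let Q : Matrix (Fin 4) (Fin 4) ℝ :=
      !![(1 - pl) * (1 - pr), (1 - pl) * pr, pl * (1 - pr), pl * pr;
         0, 1 - pl, 0, pl;
         0, 0, 1 - pr, pr;
         1 - ps, 0, 0, 0]
    let N : Matrix (Fin 4) (Fin 4) ℝ := (1 - Q)⁻¹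
    let t : Fin 4 → ℝ := N *ᵥ ![1, 1, 1, 1]
    let v : Fin 4 → ℝ := (2 • N - 1) *ᵥ t - t * t
    v 0 = ((pl * pr + pl ^ 2 + pr ^ 2 - pl ^ 2 * pr ^ 2)
            / (pl * pr * ps * (pl + pr - pl * pr))) ^ 2
      - (pl ^ 2 * pr * (1 - pr) * (2 - pr) + pl ^ 3 * (1 - pr) ^ 2 * (3 + pr)
          + 3 * pr ^ 3 + pl * pr * (4 + 2 * pr - 5 * pr ^ 2))
        / (pl * pr * ps * (pl + pr - pl * pr) ^ 2) := by
  intro Q N t v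
  have hsne : pl + pr - pl * pr ≠ 0 := by nlinarith
  have hlne : pl ≠ 0 := ne_of_gt hl
  have hrne : pr ≠ 0 := ne_of_gt hr
  have hsne' : ps ≠ 0 := ne_of_gt hs
  set A : Matrix (Fin 4) (Fin 4) ℝ := 1 - Q with hA
  have hAe : A = !![pl + pr - pl * pr, -((1 - pl) * pr), -(pl * (1 - pr)), -(pl * pr);
      0, pl, 0, -pl;
      0, 0, pr, -pr;
      -(1 - ps), 0, 0, 1] := by
    simp only [hA, Q]
    ext i j
    fin_cases i <;> fin_cases j <;>
      norm_num [Matrix.one_apply, Matrix.vecHead, Matrix.vecTail, Fin.ext_iff] <;> ring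
  have hdet : A.det = pl * pr * ps * (pl + pr - pl * pr) := by
    rw [hAe]
    simp [Matrix.det_succ_row_zero, Fin.sum_univ_succ, Fin.succAbove, Fin.castSucc, Fin.castAdd, Fin.castLE]
    ring
  have hdetne : A.det ≠ 0 := by
    rw [hdet]
    positivity
  have hNA : N * A = 1 := by
    simpa [N, hA] using Matrix.nonsing_inv_mul A (isUnit_iff_ne_zero.mpr hdetne)
  -- explicit hitting-time vector t'
  set D : ℝ := pl * pr * ps * (pl + pr - pl * pr) with hD
  set t0 : ℝ := (pl * pr + pl ^ 2 + pr ^ 2 - pl ^ 2 * pr ^ 2) / D with ht0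
  set t3 : ℝ := 1 + (1 - ps) * t0 with ht3
  set t1 : ℝ := t3 + 1 / pl with ht1
  set t2 : ℝ := t3 + 1 / pr with ht2
  set u0 : ℝ := (t0 + (pl + pr - pl * pr) * t3 + ((1 - pl) * pr / pl) * t1
      + (pl * (1 - pr) / pr) * t2) / ((pl + pr - pl * pr) * ps) with hu0
  set u3 : ℝ := t3 + (1 - ps) * u0 with hu3
  set u1 : ℝ := u3 + t1 / pl with hu1
  set u2 : ℝ := u3 + t2 / pr with hu2
  have hDne : D ≠ 0 := by rw [hD]; positivity
  have hAt : A *ᵥ ![t0, t1, t2, t3] = ![1, 1, 1, 1] := by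
    rw [hAe]
    ext i
    fin_cases i <;>
      · simp [Matrix.mulVec, dotProduct, Fin.sum_univ_succ, ht1, ht2, ht3, ht0, hu0]
        field_simp
        ring
  have hAu : A *ᵥ ![u0, u1, u2, u3] = ![t0, t1, t2, t3] := by
    rw [hAe]
    ext i
    fin_cases i <;>
      · simp [Matrix.mulVec, dotProduct, Fin.sum_univ_succ, hu1, hu2, hu3, hu0]
        field_simp
        ring
  have hteq : t = ![t0, t1, t2, t3] := by
    have : N *ᵥ (A *ᵥ ![t0, t1, t2, t3]) = ![t0, t1, t2, t3] := by
      rw [Matrix.mulVec_mulVec, hNA, Matrix.one_mulVec]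
    simpa [t, hAt] using this
  have hNteq : N *ᵥ ![t0, t1, t2, t3] = ![u0, u1, u2, u3] := by
    have : N *ᵥ (A *ᵥ ![u0, u1, u2, u3]) = ![u0, u1, u2, u3] := by
      rw [Matrix.mulVec_mulVec, hNA, Matrix.one_mulVec]
    simpa [hAu] using this
  have hv0 : v 0 = 2 * u0 - t0 - t0 * t0 := by
    simp only [v, hteq, Pi.sub_apply, Pi.mul_apply]
    have h2N : (2 • N - 1) *ᵥ ![t0, t1, t2, t3]
        = 2 • (N *ᵥ ![t0, t1, t2, t3]) - ![t0, t1, t2, t3] := by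
      rw [Matrix.sub_mulVec, Matrix.one_mulVec, Matrix.smul_mulVec]
    rw [h2N, hNteq]
    simp
  rw [hv0]
  rw [hu0, ht1, ht2, ht3, ht0, hD]
  field_simp
  ring
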